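/- Suppose e, h : ω → ω are nondecreasing, h is unbounded, and e(l) ≤ min{n : l < h(2^n)} for all l ∈ ω. Let f be any gauge function with f(2^{-k}) = 2^{-e(k)} for all k ∈ ω. Then every A ⊆ 2^ω with ℋ^f(A) = 0 belongs to J_h; that is, there exists σ : ω → 2^{<ω} with |σ(n)| = h(n) for all n and A ⊆ [σ]_∞. -/

import Mathlib

open MeasureTheory Set
open scoped ENNReal

/-- The Cantor space `2^ω = ℕ → Bool` carries the metric
`d(x,y) = 2^{-min{n : x n ≠ y n}}` (and `d(x,x) = 0`). -/
noncomputable local instance cantorMetric : MetricSpace (ℕ → Bool) := PiNat.metricSpace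

/-- A gauge function: a nondecreasing function `f : [0,∞) → [0,∞)` with `f 0 = 0` and
`lim_{x → 0⁺} f x = 0`. -/
structure IsGauge (f : ℝ → ℝ) : Prop where
  nonneg : ∀ x : ℝ, 0 ≤ x → 0 ≤ f x
  zero : f 0 = 0
  mono : MonotoneOn f (Ici 0)
  tendsto_zero : Filter.Tendsto f (nhdsWithin 0 (Ioi 0)) (nhds 0)

/-- The value `f(diam)` of a gauge function `f` on an extended-real diameter
(infinite diameters are sent to `∞`). -/
noncomputable def gaugeFn (f : ℝ → ℝ) : ℝ≥0∞ → ℝ≥0∞ := fun d =>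
  if d = ∞ then ∞ else ENNReal.ofReal (f d.toReal)

/-- The Hausdorff (outer) measure `ℋ^f` with gauge function `f`. -/
noncomputable def gaugeMeasure {X : Type*} [EMetricSpace X] (f : ℝ → ℝ) : OuterMeasure X :=
  OuterMeasure.mkMetric (gaugeFn f)

/-- `s` is an initial segment of `x : 2^ω`. -/
def InitSeg (s : List Bool) (x : ℕ → Bool) : Prop :=
  ∀ i : ℕ, (hi : i < s.length) → s.get ⟨i, hi⟩ = x i

/-- `[σ]_∞` : the set of `x ∈ 2^ω` having `σ n` as an initial segment for infinitely
many `n`. -/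
def limsupCyl (σ : ℕ → List Bool) : Set (ℕ → Bool) :=
  {x | ∃ᶠ n in Filter.atTop, InitSeg (σ n) x}

/-- The ideal `J_g = {A ⊆ 2^ω : ∃ σ, ht σ = g and A ⊆ [σ]_∞}`. -/
def Jg (g : ℕ → ℕ) : Set (Set (ℕ → Bool)) :=
  {A | ∃ σ : ℕ → List Bool, (∀ n, (σ n).length = g n) ∧ A ⊆ limsupCyl σ}

/-! ### Auxiliary lemmas -/

lemma gaugeFn_zero {f : ℝ → ℝ} (hf0 : f 0 = 0) : gaugeFn f 0 = 0 := by
  simp [gaugeFn, hf0]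

lemma ofreal_half_pow (n : ℕ) : ENNReal.ofReal ((1/2 : ℝ)^n) = ((2:ℝ≥0∞)⁻¹)^n := by
  rw [ENNReal.ofReal_pow (by norm_num)]
  congr 1
  rw [show (1/2 : ℝ) = (2:ℝ)⁻¹ by norm_num,
    ENNReal.ofReal_inv_of_pos (by norm_num), ENNReal.ofReal_ofNat]

lemma geom_tail : ∑' m : ℕ, ((2:ℝ≥0∞)⁻¹)^(m+5) ≤ ((2:ℝ≥0∞)⁻¹)^4 := by
  have h1 : ∀ m : ℕ, ((2:ℝ≥0∞)⁻¹)^(m+5) = ((2:ℝ≥0∞)⁻¹)^5 * ((2:ℝ≥0∞)⁻¹)^m := by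
    intro m; rw [← pow_add]; ring_nf
  refine le_of_eq ?_
  calc ∑' m : ℕ, ((2:ℝ≥0∞)⁻¹)^(m+5) = ∑' m : ℕ, ((2:ℝ≥0∞)⁻¹)^5 * ((2:ℝ≥0∞)⁻¹)^m :=
        tsum_congr h1
    _ = ((2:ℝ≥0∞)⁻¹)^5 * ∑' m : ℕ, ((2:ℝ≥0∞)⁻¹)^m := ENNReal.tsum_mul_left
    _ = ((2:ℝ≥0∞)⁻¹)^5 * (1 - 2⁻¹)⁻¹ := by rw [ENNReal.tsum_geometric]
    _ = ((2:ℝ≥0∞)⁻¹)^5 * 2 := by rw [ENNReal.one_sub_inv_two, inv_inv]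
    _ = ((2:ℝ≥0∞)⁻¹)^4 := by
        rw [pow_succ, mul_assoc, ENNReal.inv_mul_cancel (by norm_num) (by norm_num), mul_one]

lemma cover_of_null {X : Type*} [EMetricSpace X] {f : ℝ → ℝ} (hf0 : f 0 = 0) {A : Set X}
    (hA : gaugeMeasure f A = 0) {ε r : ℝ≥0∞} (hε : 0 < ε) (hr : 0 < r) :
    ∃ U : ℕ → Set X, (A ⊆ ⋃ i, U i) ∧ (∀ i, EMetric.diam (U i) ≤ r) ∧
      ∑' i, gaugeFn f (EMetric.diam (U i)) ≤ ε := by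
  classical
  have hpre : OuterMeasure.mkMetric'.pre (X := X) (fun s => gaugeFn f (EMetric.diam s)) r A = 0 := by
    refine le_antisymm ?_ (zero_le)
    rw [← hA]
    have hle : OuterMeasure.mkMetric'.pre (X := X) (fun s => gaugeFn f (EMetric.diam s)) r ≤
        gaugeMeasure f := by
      have heq : gaugeMeasure (X := X) f =
          ⨆ (r' : ℝ≥0∞) (_ : 0 < r'), OuterMeasure.mkMetric'.pre (X := X)
            (fun s => gaugeFn f (EMetric.diam s)) r' := rfl
      rw [heq]
      exact le_iSup₂ (f := fun r' (_ : 0 < r') => OuterMeasure.mkMetric'.pre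
        (fun s => gaugeFn f (EMetric.diam s)) r') r hr
    exact hle A
  rw [OuterMeasure.mkMetric'.pre, OuterMeasure.boundedBy_apply] at hpre
  have hlt : ⨅ (t : ℕ → Set X) (_ : A ⊆ iUnion t),
      ∑' n, ⨆ _ : (t n).Nonempty,
        MeasureTheory.extend (fun s (_ : EMetric.diam s ≤ r) => gaugeFn f (EMetric.diam s)) (t n)
      < ε := lt_of_eq_of_lt hpre hε
  obtain ⟨t, ht⟩ := iInf_lt_iff.1 hlt
  obtain ⟨hcov, hsum⟩ := iInf_lt_iff.1 ht
  refine ⟨t, hcov, ?_, ?_⟩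
  · intro n
    rcases (t n).eq_empty_or_nonempty with he | hne
    · rw [he]; exact (Metric.ediam_empty (X := X)).le.trans zero_le
    · by_contra hdr
      have hterm : (⨆ _ : (t n).Nonempty,
          MeasureTheory.extend (fun s (_ : EMetric.diam s ≤ r) => gaugeFn f (EMetric.diam s)) (t n))
          < ε := lt_of_le_of_lt (ENNReal.le_tsum n) hsum
      rw [iSup_pos hne,
        MeasureTheory.extend_eq_top (P := fun s => EMetric.diam s ≤ r) _ hdr] at hterm
      exact (lt_irrefl _ (hterm.trans_le le_top)).elim
  · have hEq : ∀ n, gaugeFn f (EMetric.diam (t n)) ≤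
        ⨆ _ : (t n).Nonempty,
          MeasureTheory.extend (fun s (_ : EMetric.diam s ≤ r) => gaugeFn f (EMetric.diam s)) (t n) := by
      intro n
      rcases (t n).eq_empty_or_nonempty with he | hne
      · rw [he, show EMetric.diam (∅ : Set X) = 0 from Metric.ediam_empty, gaugeFn_zero hf0]; exact zero_le
      · rw [iSup_pos hne]
        rcases le_or_gt (EMetric.diam (t n)) r with hdr | hdr
        · rw [MeasureTheory.extend_eq (P := fun s => EMetric.diam s ≤ r) _ hdr]
        · rw [MeasureTheory.extend_eq_top (P := fun s => EMetric.diam s ≤ r) _ (not_le.2 hdr)]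
          exact le_top
    exact le_trans (ENNReal.tsum_le_tsum hEq) hsum.le

lemma exists_cyl {V : Set (ℕ → Bool)} (hV : 0 < EMetric.diam V) (hV' : EMetric.diam V ≠ ∞) :
    ∃ (L : ℕ) (x : ℕ → Bool), x ∈ V ∧ (∀ y ∈ V, ∀ i < L, y i = x i) ∧
      ENNReal.ofReal ((1/2 : ℝ)^L) ≤ EMetric.diam V := by
  classical
  have hD : 0 < (EMetric.diam V).toReal := ENNReal.toReal_pos hV.ne' hV'
  obtain ⟨L0, hL0⟩ := exists_pow_lt_of_lt_one hD (by norm_num : (1/2:ℝ) < 1)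
  have hex : ∃ L, (1/2:ℝ)^L ≤ (EMetric.diam V).toReal := ⟨L0, hL0.le⟩
  set L := Nat.find hex with hLdef
  have hQ : (1/2:ℝ)^L ≤ (EMetric.diam V).toReal := Nat.find_spec hex
  have hmin : ∀ j < L, (EMetric.diam V).toReal < (1/2:ℝ)^j := fun j hj =>
    not_le.1 (Nat.find_min hex hj)
  have hne : V.Nonempty := by
    by_contra hcon
    rw [Set.not_nonempty_iff_eq_empty] at hcon
    rw [hcon, show EMetric.diam (∅ : Set (ℕ → Bool)) = 0 from Metric.ediam_empty] at hV
    exact lt_irrefl _ hV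
  obtain ⟨x, hx⟩ := hne
  refine ⟨L, x, hx, ?_, ?_⟩
  · intro y hy i hi
    rcases Nat.eq_zero_or_pos L with h0 | hpos
    · omega
    have hdist : dist y x ≤ (EMetric.diam V).toReal := by
      rw [dist_edist]
      exact ENNReal.toReal_mono hV' (EMetric.edist_le_diam_of_mem hy hx)
    have hlt : dist y x < (1/2:ℝ)^(L-1) := lt_of_le_of_lt hdist (hmin _ (by omega))
    exact PiNat.apply_eq_of_dist_lt hlt (by omega)
  · calc ENNReal.ofReal ((1/2:ℝ)^L) ≤ ENNReal.ofReal (EMetric.diam V).toReal :=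
        ENNReal.ofReal_le_ofReal hQ
      _ = EMetric.diam V := ENNReal.ofReal_toReal hV'

lemma count_of_tsum {S : Type*} {k : S → ℕ}
    (htot : ∑' p : S, ((2:ℝ≥0∞)⁻¹)^(k p) ≤ ((2:ℝ≥0∞)⁻¹)^4) :
    ∀ (K : ℕ) (F : Finset S), (∀ p ∈ F, k p = K) → F.card * 16 ≤ 2^K := by
  intro K F hF
  have hsum : (F.card : ℝ≥0∞) * (2⁻¹)^K ≤ (2⁻¹)^4 := by
    calc (F.card : ℝ≥0∞) * 2⁻¹^K = ∑ p ∈ F, ((2:ℝ≥0∞)⁻¹)^(k p) := by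
          rw [Finset.sum_congr rfl (fun p hp => by rw [hF p hp])]
          simp [Finset.sum_const, nsmul_eq_mul]
      _ ≤ ∑' p : S, ((2:ℝ≥0∞)⁻¹)^(k p) := ENNReal.sum_le_tsum F
      _ ≤ _ := htot
  have hreal : (F.card : ℝ) * (2⁻¹)^K ≤ (2⁻¹)^4 := by
    have := ENNReal.toReal_mono (by simp [ENNReal.pow_ne_top]) hsum
    simpa [ENNReal.toReal_mul, ENNReal.toReal_pow, ENNReal.toReal_inv] using this
  have h2 : (F.card : ℝ) * 16 ≤ 2^K := by
    have hKpos : (0:ℝ) < 2^K := by positivity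
    rw [inv_pow, inv_pow] at hreal
    rw [mul_inv_le_iff₀ hKpos] at hreal
    nlinarith [hreal]
  exact_mod_cast h2

lemma exists_assign {S : Type*} (enc : S → ℕ) (hinj : Function.Injective enc) (k : S → ℕ)
    (hcount : ∀ (K : ℕ) (F : Finset S), (∀ p ∈ F, k p = K) → F.card * 16 ≤ 2^K) :
    ∃ ι : S → ℕ, Function.Injective ι ∧ ∀ p, ι p % 2 = 0 ∧ ι p ≤ 2^(k p - 1) ∧ 4 ≤ k p := by
  classical
  have hk4 : ∀ p : S, 4 ≤ k p := by
    intro p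
    have h16 : 16 ≤ 2^(k p) := by simpa using hcount (k p) {p} (by simp)
    have : (2:ℕ)^4 ≤ 2^(k p) := by norm_num; omega
    exact (Nat.pow_le_pow_iff_right (by norm_num)).1 this
  have hfin : ∀ K : ℕ, {p : S | k p = K}.Finite := by
    intro K
    by_contra hcon
    have hcon' : {p : S | k p = K}.Infinite := hcon
    obtain ⟨F, hFsub, hFcard⟩ := hcon'.exists_subset_card_eq (2^K)
    have := hcount K F (fun p hp => hFsub hp)
    rw [hFcard] at this
    have : 0 < 2^K := Nat.pow_pos (by norm_num)
    omega
  set rk : S → ℕ := fun p => ({q : S | k q = k p ∧ enc q < enc p}).ncard with hrk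
  have hrksub : ∀ p : S, {q : S | k q = k p ∧ enc q < enc p} ⊆ {q : S | k q = k p} :=
    fun p q hq => hq.1
  have hrfin : ∀ p : S, {q : S | k q = k p ∧ enc q < enc p}.Finite :=
    fun p => (hfin (k p)).subset (hrksub p)
  have hrkb : ∀ p : S, rk p + 1 ≤ 2^(k p - 4) := by
    intro p
    have hsub : insert p {q : S | k q = k p ∧ enc q < enc p} ⊆ {q : S | k q = k p} := by
      intro q hq
      rcases Set.mem_insert_iff.1 hq with rfl | hq
      · rfl
      · exact hq.1
    have hcard1 : (insert p {q : S | k q = k p ∧ enc q < enc p}).ncard = rk p + 1 := by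
      rw [Set.ncard_insert_of_notMem (by simp) (hrfin p)]
    have hle : rk p + 1 ≤ ({q : S | k q = k p}).ncard := by
      rw [← hcard1]
      exact Set.ncard_le_ncard hsub (hfin (k p))
    have hcl : ({q : S | k q = k p}).ncard * 16 ≤ 2^(k p) := by
      have hc := hcount (k p) (hfin (k p)).toFinset (fun q hq => ((hfin (k p)).mem_toFinset).1 hq)
      rwa [← Set.ncard_eq_toFinset_card _ (hfin (k p))] at hc
    have hpow : (2:ℕ)^(k p) = 2^(k p - 4) * 16 := by
      have h4 := hk4 p
      have : k p = (k p - 4) + 4 := by omega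
      rw [this, pow_add]; norm_num
    have : (rk p + 1) * 16 ≤ 2^(k p - 4) * 16 := by
      calc (rk p + 1) * 16 ≤ ({q : S | k q = k p}).ncard * 16 :=
            Nat.mul_le_mul_right _ hle
        _ ≤ 2^(k p) := hcl
        _ = 2^(k p - 4) * 16 := hpow
    exact Nat.le_of_mul_le_mul_right this (by norm_num)
  refine ⟨fun p => 2 * (2^(k p - 4) + rk p), ?_, ?_⟩
  · have hlow : ∀ p : S, 2^(k p - 3) ≤ 2 * (2^(k p - 4) + rk p) := by
      intro p
      have h4 := hk4 p
      have h3 : k p - 3 = (k p - 4) + 1 := by omega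
      rw [h3, pow_succ]
      have := Nat.le_add_right (2^(k p - 4)) (rk p)
      calc 2^(k p - 4) * 2 = 2 * 2^(k p - 4) := by ring
        _ ≤ 2 * (2^(k p - 4) + rk p) := Nat.mul_le_mul_left _ this
    have hhigh : ∀ p : S, 2 * (2^(k p - 4) + rk p) < 2^(k p - 2) := by
      intro p
      have h4 := hk4 p
      have h1 : k p - 2 = (k p - 4) + 2 := by omega
      have h2 := hrkb p
      rw [h1, pow_add]
      have : 0 < 2^(k p - 4) := Nat.pow_pos (by norm_num)
      nlinarith
    have hkey : ∀ p q : S, k p < k q →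
        2 * (2^(k p - 4) + rk p) < 2 * (2^(k q - 4) + rk q) := by
      intro p q hklt
      have h1 : k p - 2 ≤ k q - 3 := by have hp4 := hk4 p; have hq4 := hk4 q; omega
      calc 2 * (2^(k p - 4) + rk p) < 2^(k p - 2) := hhigh p
        _ ≤ 2^(k q - 3) := Nat.pow_le_pow_right (by norm_num) h1
        _ ≤ _ := hlow q
    have hkey2 : ∀ p q : S, k p = k q → enc p < enc q → rk p < rk q := by
      intro p q hkeq henc
      have hsub2 : insert p {q' : S | k q' = k p ∧ enc q' < enc p} ⊆
          {q' : S | k q' = k q ∧ enc q' < enc q} := by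
        intro q' hq'
        rcases Set.mem_insert_iff.1 hq' with rfl | hq'
        · exact ⟨hkeq.symm ▸ rfl, henc⟩
        · exact ⟨hkeq ▸ hq'.1, hq'.2.trans henc⟩
      have : rk p + 1 ≤ rk q := by
        have hcard1 : (insert p {q' : S | k q' = k p ∧ enc q' < enc p}).ncard = rk p + 1 := by
          rw [Set.ncard_insert_of_notMem (by simp) (hrfin p)]
        rw [← hcard1]
        exact Set.ncard_le_ncard hsub2 (hrfin q)
      omega
    intro p q hpq
    simp only at hpq
    rcases lt_trichotomy (k p) (k q) with hk | hk | hk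
    · exact absurd hpq (ne_of_lt (hkey p q hk))
    · rcases lt_trichotomy (enc p) (enc q) with he | he | he
      · exfalso
        have hr := hkey2 p q hk he
        rw [hk] at hpq
        have h2 := Nat.eq_of_mul_eq_mul_left (by norm_num : 0 < 2) hpq
        have h3 := Nat.add_left_cancel h2
        omega
      · exact hinj he
      · exfalso
        have hr := hkey2 q p hk.symm he
        rw [hk] at hpq
        have h2 := Nat.eq_of_mul_eq_mul_left (by norm_num : 0 < 2) hpq
        have h3 := Nat.add_left_cancel h2
        omega
    · exact absurd hpq.symm (ne_of_lt (hkey q p hk))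
  · intro p
    refine ⟨Nat.mul_mod_right _ _, ?_, hk4 p⟩
    have h2 := hrkb p
    have h1 : k p - 1 = (k p - 4) + 3 := by have := hk4 p; omega
    rw [h1, pow_add]
    have : 0 < 2^(k p - 4) := Nat.pow_pos (by norm_num)
    nlinarith

lemma exists_sigma (h : ℕ → ℕ) (hh : Monotone h) {S : Type*} (enc : S → ℕ)
    (hinjS : Function.Injective enc) (k L : S → ℕ) (x : S → ℕ → Bool)
    (hcount : ∀ (K : ℕ) (F : Finset S), (∀ p ∈ F, k p = K) → F.card * 16 ≤ 2^K)
    (hhL : ∀ p : S, h (2^(k p - 1)) ≤ L p)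
    (y : ℕ × ℕ → ℕ → Bool) :
    ∃ σ : ℕ → List Bool, (∀ n, (σ n).length = h n) ∧
      ∀ z : ℕ → Bool,
        ((∀ M : ℕ, ∃ p : S, M ≤ enc p ∧ ∀ i < L p, z i = x p i) ∨ (∃ q : ℕ × ℕ, z = y q)) →
        z ∈ limsupCyl σ := by
  classical
  obtain ⟨ι, hιinj, hιprop⟩ := exists_assign enc hinjS k hcount
  refine ⟨fun n =>
    if n % 2 = 0 then
      (if hp : ∃ p : S, ι p = n then List.ofFn (fun j : Fin (h n) => x hp.choose j)
       else List.replicate (h n) false)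
    else List.ofFn (fun j : Fin (h n) => y (Nat.unpair (Nat.unpair (n / 2)).1) j), ?_, ?_⟩
  · intro n
    by_cases h2 : n % 2 = 0
    · by_cases hp : ∃ p : S, ι p = n <;> simp [h2, hp]
    · simp [h2]
  · intro z hz
    rcases hz with hz | ⟨q, rfl⟩
    · rw [limsupCyl, Set.mem_setOf_eq, Filter.frequently_atTop]
      intro N
      have hSinf : {p : S | ∀ i < L p, z i = x p i}.Infinite := by
        by_contra hfin
        rw [Set.not_infinite] at hfin
        obtain ⟨M, hM⟩ := (hfin.image enc).bddAbove
        obtain ⟨p, hpM, hpmatch⟩ := hz (M + 1)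
        have : enc p ≤ M := hM (Set.mem_image_of_mem enc hpmatch)
        omega
      have hιinf : (ι '' {p : S | ∀ i < L p, z i = x p i}).Infinite :=
        hSinf.image hιinj.injOn
      obtain ⟨n, ⟨p, hpmem, rfl⟩, hn⟩ := hιinf.exists_notMem_finset (Finset.range N)
      obtain ⟨heven, hle2, hk4⟩ := hιprop p
      refine ⟨ι p, by simpa [Finset.mem_range, not_lt] using hn, ?_⟩
      have hex : ∃ p' : S, ι p' = ι p := ⟨p, rfl⟩
      have hpe : hex.choose = p := hιinj hex.choose_spec
      rw [if_pos heven, dif_pos hex, hpe]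
      intro i hi
      rw [List.get_ofFn]
      have hiL : i < L p := by
        have h1 : i < h (ι p) := by simpa using hi
        have h2 : h (ι p) ≤ h (2^(k p - 1)) := hh hle2
        have := hhL p
        omega
      simp [(hpmem i hiL).symm]
    · rw [limsupCyl, Set.mem_setOf_eq, Filter.frequently_atTop]
      intro N
      set n := 2 * Nat.pair (Nat.pair q.1 q.2) N + 1 with hn
      have hge : N ≤ n := by
        have := Nat.right_le_pair (Nat.pair q.1 q.2) N
        omega
      refine ⟨n, hge, ?_⟩
      have hodd : ¬ (n % 2 = 0) := by omega
      have hdiv : n / 2 = Nat.pair (Nat.pair q.1 q.2) N := by omega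
      rw [if_neg hodd, hdiv, Nat.unpair_pair]
      intro i hi
      rw [List.get_ofFn]
      simp [Nat.unpair_pair]

/-- Suppose `e, h : ω → ω` are nondecreasing, `h` is unbounded, and
`e l ≤ min {n : l < h(2^n)}` for all `l`. Let `f` be any gauge function with
`f(2^{-k}) = 2^{-e(k)}` for all `k`. Then every `A ⊆ 2^ω` with `ℋ^f(A) = 0` belongs
to `J_h`. -/
theorem stmt9 (e h : ℕ → ℕ) (he : Monotone e) (hh : Monotone h)
    (hunb : ∀ m : ℕ, ∃ n : ℕ, m < h n)
    (heh : ∀ l : ℕ, e l ≤ sInf {n : ℕ | l < h (2 ^ n)})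
    (f : ℝ → ℝ) (hf : IsGauge f)
    (hfe : ∀ k : ℕ, f ((1 / 2 : ℝ) ^ k) = (1 / 2 : ℝ) ^ (e k)) :
    ∀ A : Set (ℕ → Bool), gaugeMeasure f A = 0 → A ∈ Jg h := by
  classical
  intro A hA
  have hcov0 : ∀ m : ℕ, ∃ V : ℕ → Set (ℕ → Bool), (A ⊆ ⋃ i, V i) ∧
      (∀ i, EMetric.diam (V i) ≤ ENNReal.ofReal ((1/2:ℝ)^m)) ∧
      ∑' i, gaugeFn f (EMetric.diam (V i)) ≤ ((2:ℝ≥0∞)⁻¹)^(m+5) := by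
    intro m
    refine cover_of_null hf.zero hA ?_ ?_
    · exact ENNReal.pow_pos (ENNReal.inv_pos.2 (by norm_num)) _
    · exact ENNReal.ofReal_pos.2 (by positivity)
  choose U hcovU hdiamU hsumU using hcov0
  have hfinU : ∀ p : ℕ × ℕ, EMetric.diam (U p.1 p.2) ≠ ∞ := fun p =>
    ne_top_of_le_ne_top ENNReal.ofReal_ne_top (hdiamU p.1 p.2)
  have hstr : ∀ p : {p : ℕ × ℕ // 0 < EMetric.diam (U p.1 p.2)},
      ∃ (Lp : ℕ) (xp : ℕ → Bool), xp ∈ U p.1.1 p.1.2 ∧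
        (∀ w ∈ U p.1.1 p.1.2, ∀ i < Lp, w i = xp i) ∧
        ENNReal.ofReal ((1/2:ℝ)^Lp) ≤ EMetric.diam (U p.1.1 p.1.2) :=
    fun p => exists_cyl p.2 (hfinU p.1)
  choose L x hxmem hcylp hLle using hstr
  have hwt : ∀ p : {p : ℕ × ℕ // 0 < EMetric.diam (U p.1 p.2)},
      ((2:ℝ≥0∞)⁻¹)^(e (L p)) ≤ gaugeFn f (EMetric.diam (U p.1.1 p.1.2)) := by
    intro p
    have hfin := hfinU p.1
    have hle : (1/2:ℝ)^(L p) ≤ (EMetric.diam (U p.1.1 p.1.2)).toReal :=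
      (ENNReal.ofReal_le_iff_le_toReal hfin).1 (hLle p)
    have hmono := hf.mono (Set.mem_Ici.2 (by positivity : (0:ℝ) ≤ (1/2:ℝ)^(L p)))
      (Set.mem_Ici.2 ENNReal.toReal_nonneg) hle
    simp only [gaugeFn]
    rw [if_neg hfin]
    calc ((2:ℝ≥0∞)⁻¹)^(e (L p)) = ENNReal.ofReal ((1/2:ℝ)^(e (L p))) := (ofreal_half_pow _).symm
      _ = ENNReal.ofReal (f ((1/2:ℝ)^(L p))) := by rw [hfe]
      _ ≤ ENNReal.ofReal (f (EMetric.diam (U p.1.1 p.1.2)).toReal) :=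
          ENNReal.ofReal_le_ofReal hmono
  have htot : ∑' p : {p : ℕ × ℕ // 0 < EMetric.diam (U p.1 p.2)},
      ((2:ℝ≥0∞)⁻¹)^(e (L p)) ≤ ((2:ℝ≥0∞)⁻¹)^4 := by
    calc ∑' p : {p : ℕ × ℕ // 0 < EMetric.diam (U p.1 p.2)}, ((2:ℝ≥0∞)⁻¹)^(e (L p))
        ≤ ∑' p : {p : ℕ × ℕ // 0 < EMetric.diam (U p.1 p.2)},
            gaugeFn f (EMetric.diam (U p.1.1 p.1.2)) := ENNReal.tsum_le_tsum hwt
      _ ≤ ∑' q : ℕ × ℕ, gaugeFn f (EMetric.diam (U q.1 q.2)) :=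
          Summable.tsum_le_tsum_of_inj Subtype.val Subtype.val_injective (fun _ _ => zero_le)
            (fun _ => le_rfl) ENNReal.summable ENNReal.summable
      _ = ∑' m, ∑' i, gaugeFn f (EMetric.diam (U m i)) :=
          ENNReal.tsum_prod (f := fun m i => gaugeFn f (EMetric.diam (U m i)))
      _ ≤ ∑' m : ℕ, ((2:ℝ≥0∞)⁻¹)^(m+5) := ENNReal.tsum_le_tsum hsumU
      _ ≤ _ := geom_tail
  have hcount := count_of_tsum htot
  have hencinj : Function.Injective
      (fun p : {p : ℕ × ℕ // 0 < EMetric.diam (U p.1 p.2)} => Nat.pair p.1.1 p.1.2) := by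
    intro p q hpq
    simp only at hpq
    have h12 := Nat.pair_eq_pair.1 hpq
    exact Subtype.ext (Prod.ext h12.1 h12.2)
  have hk4 : ∀ p : {p : ℕ × ℕ // 0 < EMetric.diam (U p.1 p.2)}, 4 ≤ e (L p) := by
    intro p
    have h16 : 16 ≤ 2^(e (L p)) := by simpa using hcount (e (L p)) {p} (by simp)
    have : (2:ℕ)^4 ≤ 2^(e (L p)) := by norm_num; omega
    exact (Nat.pow_le_pow_iff_right (by norm_num)).1 this
  have hhL : ∀ p : {p : ℕ × ℕ // 0 < EMetric.diam (U p.1 p.2)},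
      h (2^(e (L p) - 1)) ≤ L p := by
    intro p
    by_contra hcon
    push_neg at hcon
    have hmem : (e (L p) - 1) ∈ {n : ℕ | L p < h (2^n)} := hcon
    have hge : sInf {n : ℕ | L p < h (2^n)} ≤ e (L p) - 1 := Nat.sInf_le hmem
    have h1 := heh (L p)
    have h2 := hk4 p
    omega
  have hy0 : ∀ q : ℕ × ℕ, ∃ w : ℕ → Bool, (U q.1 q.2).Nonempty → w ∈ U q.1 q.2 := by
    intro q
    by_cases hne : (U q.1 q.2).Nonempty
    · exact ⟨hne.choose, fun _ => hne.choose_spec⟩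
    · exact ⟨fun _ => false, fun hc => absurd hc hne⟩
  choose y hy using hy0
  obtain ⟨σ, hlen, hmatch⟩ := exists_sigma h hh
    (fun p : {p : ℕ × ℕ // 0 < EMetric.diam (U p.1 p.2)} => Nat.pair p.1.1 p.1.2)
    hencinj (fun p => e (L p)) L x hcount hhL y
  refine ⟨σ, hlen, ?_⟩
  intro z hz
  apply hmatch
  have hidx : ∀ m : ℕ, ∃ i, z ∈ U m i := fun m => Set.mem_iUnion.1 (hcovU m hz)
  choose idx hidxmem using hidx
  by_cases hcase : ∀ M : ℕ, ∃ m, M ≤ m ∧ 0 < EMetric.diam (U m (idx m))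
  · left
    intro M
    obtain ⟨m, hMm, hpos⟩ := hcase M
    refine ⟨⟨(m, idx m), hpos⟩, ?_, ?_⟩
    · calc M ≤ m := hMm
        _ ≤ Nat.pair m (idx m) := Nat.left_le_pair m (idx m)
    · intro i hi
      exact hcylp ⟨(m, idx m), hpos⟩ z (hidxmem m) i hi
  · right
    push_neg at hcase
    obtain ⟨M, hM⟩ := hcase
    refine ⟨(M, idx M), ?_⟩
    have hzero : EMetric.diam (U M (idx M)) = 0 :=
      le_antisymm (hM M le_rfl) (zero_le)
    have hsub : (U M (idx M)).Subsingleton := EMetric.diam_eq_zero_iff.1 hzero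
    exact hsub (hidxmem M) (hy (M, idx M) ⟨z, hidxmem M⟩)
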